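/- Let α : Fin 6 → ℝ² be given by α₁ = (−2,2), α₂ = (−3,4), α₃ = (0,6), α₄ = (2,4), α₅ = (3,2), α₆ = (−1,2). Then there exists b' ∈ ℝ⁶ whose exact concurrency pattern is the quadrilateral set I' = {{1,2,6}, {1,3,4}, {2,3,5}, {4,5,6}} (the companion of the quadrilateral set I = {{1,2,3}, {1,4,6}, {2,5,6}, {3,4,5}}, whose members are the complements of the members of I in {1,…,6}). -/

import Mathlib

/-- `I` is the exact concurrency pattern of the translate `b`: a triple of the lines
`ℓ_i(b) = {x : α i · x = b i}` is concurrent exactly when its index set belongs to `I`. -/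
def ConcPattern {n : ℕ} (α : Fin n → Fin 2 → ℝ) (b : Fin n → ℝ)
    (I : Finset (Finset (Fin n))) : Prop :=
  ∀ L : Finset (Fin n), L.card = 3 →
    ((∃ p : Fin 2 → ℝ, ∀ i ∈ L, ∑ t, α i t * p t = b i) ↔ L ∈ I)

@[simp]
lemma cons_val_five' {α : Type*} {m : ℕ} (x : α) (u : Fin (m + 5) → α) :
    Matrix.vecCons x u 5 =
      Matrix.vecHead (Matrix.vecTail (Matrix.vecTail (Matrix.vecTail (Matrix.vecTail u)))) :=
  rfl

/-- The arrangement with normals `α₁ = (−2,2), α₂ = (−3,4), α₃ = (0,6), α₄ = (2,4),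
α₅ = (3,2), α₆ = (−1,2)` admits a translate whose exact concurrency pattern is the companion
quadrilateral set `I' = {{1,2,6},{1,3,4},{2,3,5},{4,5,6}}` (0-indexed below), the set of
complements of the members of `I = {{1,2,3},{1,4,6},{2,5,6},{3,4,5}}`. -/
theorem crapo_companion_quadrilateral_set :
    let α : Fin 6 → Fin 2 → ℝ :=
      ![![-2, 2], ![-3, 4], ![0, 6], ![2, 4], ![3, 2], ![-1, 2]]
    let I' : Finset (Finset (Fin 6)) := {{0, 1, 5}, {0, 2, 3}, {1, 2, 4}, {3, 4, 5}}
    ∃ b' : Fin 6 → ℝ, ConcPattern α b' I' := by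
  intro α I'
  refine ⟨![0, 0, 72, 72, 72, 0], ?_⟩
  intro L hL
  have hmem : L ∈ ({{0,1,2},{0,1,3},{0,1,4},{0,1,5},{0,2,3},{0,2,4},{0,2,5},{0,3,4},{0,3,5},
      {0,4,5},{1,2,3},{1,2,4},{1,2,5},{1,3,4},{1,3,5},{1,4,5},{2,3,4},{2,3,5},{2,4,5},
      {3,4,5}} : Finset (Finset (Fin 6))) := by
    revert hL; revert L; decide
  clear hL
  fin_cases hmem <;>
    simp only [α, I'] <;>
    first
    | (refine iff_of_true ⟨![0, 0], ?_⟩ (by decide);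
       intro i hi; fin_cases hi <;> simp only [Fin.sum_univ_two, Matrix.cons_val] <;> norm_num [Fin.sum_univ_two, Matrix.vecHead, Matrix.vecTail];
       done)
    | (refine iff_of_true ⟨![12, 12], ?_⟩ (by decide);
       intro i hi; fin_cases hi <;> simp only [Fin.sum_univ_two, Matrix.cons_val] <;> norm_num [Fin.sum_univ_two, Matrix.vecHead, Matrix.vecTail];
       done)
    | (refine iff_of_true ⟨![16, 12], ?_⟩ (by decide);
       intro i hi; fin_cases hi <;> simp only [Fin.sum_univ_two, Matrix.cons_val] <;> norm_num [Fin.sum_univ_two, Matrix.vecHead, Matrix.vecTail];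
       done)
    | (refine iff_of_true ⟨![18, 9], ?_⟩ (by decide);
       intro i hi; fin_cases hi <;> simp only [Fin.sum_univ_two, Matrix.cons_val] <;> norm_num [Fin.sum_univ_two, Matrix.vecHead, Matrix.vecTail];
       done)
    | (refine iff_of_false ?_ (by decide);
       rintro ⟨p, h⟩;
       simp only [Finset.mem_insert, Finset.mem_singleton, forall_eq_or_imp, forall_eq,
         Fin.sum_univ_two] at h;
       simp only [Matrix.cons_val] at h;
       norm_num [Matrix.vecHead, Matrix.vecTail] at h;
       obtain ⟨h1, h2, h3⟩ := h; linarith)
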